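/- Let Ω ⊂ ℝ² be a bounded measurable set, k > 0, and G : Ω × Ω → M₂(ℂ) a measurable kernel with μ := k · sup_{x∈Ω} ∫_Ω ‖G(x,x')‖₁ dx' < ∞, where ‖·‖₁ is the entrywise ℓ¹ matrix norm. Let V ∈ L^∞(Ω), ψ₀ ∈ L^∞(Ω; ℂ²), and define Φ_a on L^∞(Ω; ℂ²) by (Φ_a ψ_s)(x) = −k ∫_Ω G(x,x') V(x') (ψ₀(x') + ψ_s(x')) dx'. Then for all ψ_s, φ_s ∈ L^∞(Ω; ℂ²), ‖Φ_a ψ_s − Φ_a φ_s‖_{L^∞} ≤ μ ‖V‖_{L^∞(Ω)} ‖ψ_s − φ_s‖_{L^∞}; in particular Φ_a is a contraction whenever μ‖V‖_{L^∞(Ω)} < 1. -/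

import Mathlib

open MeasureTheory Set

/-- The entrywise ℓ¹ norm of a 2×2 complex matrix. -/
noncomputable def matL1Norm (A : Matrix (Fin 2) (Fin 2) ℂ) : ℝ :=
  ∑ i : Fin 2, ∑ j : Fin 2, ‖A i j‖

lemma matL1Norm_nonneg (A : Matrix (Fin 2) (Fin 2) ℂ) : 0 ≤ matL1Norm A := by
  unfold matL1Norm
  positivity

lemma mulVec_norm_le (A : Matrix (Fin 2) (Fin 2) ℂ) (v : Fin 2 → ℂ) :
    ‖A.mulVec v‖ ≤ matL1Norm A * ‖v‖ := by
  rw [pi_norm_le_iff_of_nonneg (mul_nonneg (matL1Norm_nonneg A) (norm_nonneg v))]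
  intro i
  calc ‖A.mulVec v i‖ = ‖∑ j, A i j * v j‖ := rfl
    _ ≤ ∑ j, ‖A i j * v j‖ := norm_sum_le _ _
    _ ≤ ∑ j, ‖A i j‖ * ‖v‖ := by
        refine Finset.sum_le_sum fun j _ => ?_
        rw [norm_mul]
        exact mul_le_mul_of_nonneg_left (norm_le_pi_norm v j) (norm_nonneg _)
    _ = (∑ j, ‖A i j‖) * ‖v‖ := by rw [Finset.sum_mul]
    _ ≤ matL1Norm A * ‖v‖ := by
        refine mul_le_mul_of_nonneg_right ?_ (norm_nonneg _)
        unfold matL1Norm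
        exact Finset.single_le_sum (f := fun i => ∑ j, ‖A i j‖)
          (fun i _ => by positivity) (Finset.mem_univ i)

/-- **Contraction estimate for the anti-chiral Lippmann–Schwinger map** `Φ_a`, where
`(Φ_a ψ_s)(x) = −k ∫_Ω G(x,x') V(x') (ψ₀(x') + ψ_s(x')) dx'`:
`‖Φ_a ψ_s − Φ_a φ_s‖_{L^∞} ≤ μ ‖V‖_{L^∞(Ω)} ‖ψ_s − φ_s‖_{L^∞}`.  In particular `Φ_a`
is a contraction whenever `μ‖V‖_{L^∞(Ω)} < 1`. -/
theorem stmt_4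
    (Ω : Set (ℝ × ℝ)) (hΩmeas : MeasurableSet Ω) (hΩbdd : Bornology.IsBounded Ω)
    (k : ℝ) (hk : 0 < k)
    (G : ℝ × ℝ → ℝ × ℝ → Matrix (Fin 2) (Fin 2) ℂ)
    (hGmeas : ∀ i j : Fin 2, Measurable (fun p : (ℝ × ℝ) × (ℝ × ℝ) => G p.1 p.2 i j))
    (μ : ℝ) (hGint : ∀ x ∈ Ω, IntegrableOn (fun x' => matL1Norm (G x x')) Ω)
    (hμ : ∀ x ∈ Ω, k * ∫ x' in Ω, matL1Norm (G x x') ≤ μ)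
    (V : ℝ × ℝ → ℂ) (hVmeas : Measurable V)
    (c : ℝ) (hc : 0 ≤ c) (hVbound : ∀ x ∈ Ω, ‖V x‖ ≤ c)
    (ψ₀ : ℝ × ℝ → Fin 2 → ℂ) (hψ₀meas : Measurable ψ₀)
    (C₀ : ℝ) (hψ₀bound : ∀ x ∈ Ω, ‖ψ₀ x‖ ≤ C₀)
    (ψs φs : ℝ × ℝ → Fin 2 → ℂ)
    (hψsmeas : Measurable ψs) (hφsmeas : Measurable φs)
    (Cs : ℝ) (hψsbound : ∀ x ∈ Ω, ‖ψs x‖ ≤ Cs) (hφsbound : ∀ x ∈ Ω, ‖φs x‖ ≤ Cs)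
    (d : ℝ) (hd : 0 ≤ d) (hdiff : ∀ x' ∈ Ω, ‖ψs x' - φs x'‖ ≤ d) :
    ∀ x ∈ Ω,
      ‖((-k) • ∫ x' in Ω, (G x x').mulVec (V x' • (ψ₀ x' + ψs x'))) -
        ((-k) • ∫ x' in Ω, (G x x').mulVec (V x' • (ψ₀ x' + φs x')))‖ ≤
        μ * c * d := by
  intro x hx
  have hC₀ : 0 ≤ C₀ := le_trans (norm_nonneg _) (hψ₀bound x hx)
  have hCs : 0 ≤ Cs := le_trans (norm_nonneg _) (hψsbound x hx)
  -- measurability of G x · i j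
  have hGxmeas : ∀ i j : Fin 2, Measurable (fun x' => G x x' i j) := fun i j =>
    (hGmeas i j).comp (measurable_const.prodMk measurable_id)
  -- generic integrability
  have key : ∀ (w : ℝ × ℝ → Fin 2 → ℂ), Measurable w → (∀ x' ∈ Ω, ‖w x'‖ ≤ C₀ + Cs) →
      IntegrableOn (fun x' => (G x x').mulVec (V x' • w x')) Ω := by
    intro w hwmeas hwb
    have hmeas : AEStronglyMeasurable (fun x' => (G x x').mulVec (V x' • w x'))
        (volume.restrict Ω) := by
      refine Measurable.aestronglyMeasurable ?_
      rw [measurable_pi_iff]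
      intro i
      show Measurable fun x' => ∑ j, G x x' i j * (V x' • w x') j
      exact Finset.measurable_sum _ fun j _ =>
        (hGxmeas i j).mul (hVmeas.mul ((measurable_pi_apply j).comp hwmeas))
    refine Integrable.mono' ((hGint x hx).mul_const (c * (C₀ + Cs))) hmeas ?_
    rw [ae_restrict_iff' hΩmeas]
    refine Filter.Eventually.of_forall fun x' hx' => ?_
    calc ‖(G x x').mulVec (V x' • w x')‖ ≤ matL1Norm (G x x') * ‖V x' • w x'‖ :=
          mulVec_norm_le _ _
      _ ≤ matL1Norm (G x x') * (c * (C₀ + Cs)) := by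
          refine mul_le_mul_of_nonneg_left ?_ (matL1Norm_nonneg _)
          rw [norm_smul]
          exact mul_le_mul (hVbound x' hx') (hwb x' hx') (norm_nonneg _) hc
  have hψb : ∀ x' ∈ Ω, ‖ψ₀ x' + ψs x'‖ ≤ C₀ + Cs := fun x' hx' =>
    (norm_add_le _ _).trans (add_le_add (hψ₀bound x' hx') (hψsbound x' hx'))
  have hφb : ∀ x' ∈ Ω, ‖ψ₀ x' + φs x'‖ ≤ C₀ + Cs := fun x' hx' =>
    (norm_add_le _ _).trans (add_le_add (hψ₀bound x' hx') (hφsbound x' hx'))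
  have hf := key (fun x' => ψ₀ x' + ψs x') (hψ₀meas.add hψsmeas) hψb
  have hg := key (fun x' => ψ₀ x' + φs x') (hψ₀meas.add hφsmeas) hφb
  rw [← smul_sub, ← integral_sub hf hg]
  have heq : ∀ x', (G x x').mulVec (V x' • (ψ₀ x' + ψs x')) -
      (G x x').mulVec (V x' • (ψ₀ x' + φs x')) =
      (G x x').mulVec (V x' • (ψs x' - φs x')) := by
    intro x'
    rw [← Matrix.mulVec_sub, ← smul_sub]
    congr 2
    abel
  have hbound : ‖∫ x' in Ω, ((G x x').mulVec (V x' • (ψ₀ x' + ψs x')) -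
      (G x x').mulVec (V x' • (ψ₀ x' + φs x')))‖ ≤
      (∫ x' in Ω, matL1Norm (G x x')) * (c * d) := by
    calc ‖∫ x' in Ω, ((G x x').mulVec (V x' • (ψ₀ x' + ψs x')) -
          (G x x').mulVec (V x' • (ψ₀ x' + φs x')))‖
        ≤ ∫ x' in Ω, ‖(G x x').mulVec (V x' • (ψ₀ x' + ψs x')) -
          (G x x').mulVec (V x' • (ψ₀ x' + φs x'))‖ := norm_integral_le_integral_norm _
      _ ≤ ∫ x' in Ω, matL1Norm (G x x') * (c * d) := by
          refine integral_mono_of_nonneg (Filter.Eventually.of_forall fun _ => norm_nonneg _)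
            ((hGint x hx).mul_const (c * d)) ?_
          filter_upwards [ae_restrict_mem hΩmeas] with x' hx'
          rw [heq x']
          calc ‖(G x x').mulVec (V x' • (ψs x' - φs x'))‖
              ≤ matL1Norm (G x x') * ‖V x' • (ψs x' - φs x')‖ := mulVec_norm_le _ _
            _ ≤ matL1Norm (G x x') * (c * d) := by
                refine mul_le_mul_of_nonneg_left ?_ (matL1Norm_nonneg _)
                rw [norm_smul]
                exact mul_le_mul (hVbound x' hx') (hdiff x' hx') (norm_nonneg _) hc
      _ = (∫ x' in Ω, matL1Norm (G x x')) * (c * d) := integral_mul_const _ _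
  rw [norm_smul, norm_neg, Real.norm_eq_abs, abs_of_pos hk]
  calc k * ‖∫ x' in Ω, ((G x x').mulVec (V x' • (ψ₀ x' + ψs x')) -
        (G x x').mulVec (V x' • (ψ₀ x' + φs x')))‖
      ≤ k * ((∫ x' in Ω, matL1Norm (G x x')) * (c * d)) :=
        mul_le_mul_of_nonneg_left hbound hk.le
    _ = (k * ∫ x' in Ω, matL1Norm (G x x')) * (c * d) := by ring
    _ ≤ μ * (c * d) := mul_le_mul_of_nonneg_right (hμ x hx) (by positivity)
    _ = μ * c * d := by ring
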